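/- Stiebitz's theorem implies the Borsuk–Ulam theorem: if for every k ≥ 2 every graph in 𝓜_k has chromatic number at least k, then there is no continuous map f : Sⁿ → S^{n−1} with f(−x) = −f(x) for all x ∈ Sⁿ. -/

import Mathlib

open Real

section Helpers

lemma lipsin (a b : ℝ) : |Real.sin a - Real.sin b| ≤ |a - b| := by
  rw [Real.sin_sub_sin]
  have h1 : |Real.sin ((a-b)/2)| ≤ |(a-b)/2| := Real.abs_sin_le_abs ..
  have h2 : |Real.cos ((a+b)/2)| ≤ 1 := Real.abs_cos_le_one _
  calc |2 * Real.sin ((a-b)/2) * Real.cos ((a+b)/2)|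
      = 2 * |Real.sin ((a-b)/2)| * |Real.cos ((a+b)/2)| := by
        rw [abs_mul, abs_mul]; simp [abs_of_nonneg]
    _ ≤ 2 * |(a-b)/2| * 1 := by
        apply mul_le_mul _ h2 (abs_nonneg _) (by positivity)
        exact mul_le_mul_of_nonneg_left h1 (by norm_num)
    _ = |a - b| := by rw [abs_div]; norm_num; ring

lemma lipcos (a b : ℝ) : |Real.cos a - Real.cos b| ≤ |a - b| := by
  rw [Real.cos_sub_cos]
  have h1 : |Real.sin ((a-b)/2)| ≤ |(a-b)/2| := Real.abs_sin_le_abs ..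
  have h2 : |Real.sin ((a+b)/2)| ≤ 1 := Real.abs_sin_le_one _
  calc |-2 * Real.sin ((a+b)/2) * Real.sin ((a-b)/2)|
      = 2 * |Real.sin ((a+b)/2)| * |Real.sin ((a-b)/2)| := by
        rw [abs_mul, abs_mul]; simp [abs_of_nonneg]
    _ ≤ 2 * 1 * |(a-b)/2| := by
        apply mul_le_mul _ h1 (abs_nonneg _) (by norm_num)
        exact mul_le_mul_of_nonneg_left h2 (by norm_num)
    _ = |a - b| := by rw [abs_div]; norm_num; ring

noncomputable def snocE {m : ℕ} (y : EuclideanSpace ℝ (Fin m)) (a : ℝ) :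
    EuclideanSpace ℝ (Fin (m+1)) :=
  WithLp.toLp 2 (Fin.snoc (α := fun _ => ℝ) y a)

lemma snocE_castSucc {m : ℕ} (y : EuclideanSpace ℝ (Fin m)) (a : ℝ) (i : Fin m) :
    snocE y a i.castSucc = y i := Fin.snoc_castSucc (α := fun _ => ℝ) ..

lemma snocE_last {m : ℕ} (y : EuclideanSpace ℝ (Fin m)) (a : ℝ) :
    snocE y a (Fin.last m) = a := Fin.snoc_last (α := fun _ => ℝ) ..

lemma snocE_norm {m : ℕ} (y : EuclideanSpace ℝ (Fin m)) (a : ℝ) :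
    ‖snocE y a‖ = Real.sqrt (‖y‖^2 + a^2) := by
  rw [EuclideanSpace.norm_eq]
  congr 1
  rw [Fin.sum_univ_castSucc]
  have hy : ‖y‖^2 = ∑ i : Fin m, ‖y i‖^2 := by
    rw [EuclideanSpace.norm_eq, Real.sq_sqrt (by positivity)]
  rw [hy]
  congr 1
  · exact Finset.sum_congr rfl fun i _ => by rw [snocE_castSucc]
  · rw [snocE_last, Real.norm_eq_abs, sq_abs]

lemma snocE_add {m : ℕ} (y y' : EuclideanSpace ℝ (Fin m)) (a a' : ℝ) :
    snocE y a + snocE y' a' = snocE (y + y') (a + a') := by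
  ext j
  induction j using Fin.lastCases with
  | last => simp [PiLp.add_apply, snocE_last]
  | cast i => simp [PiLp.add_apply, snocE_castSucc]

lemma snocE_norm_le {m : ℕ} (y : EuclideanSpace ℝ (Fin m)) (a : ℝ) :
    ‖snocE y a‖ ≤ ‖y‖ + |a| := by
  rw [snocE_norm]
  have : ‖y‖^2 + a^2 ≤ (‖y‖ + |a|)^2 := by
    have := norm_nonneg y; have := abs_nonneg a
    nlinarith [sq_abs a]
  calc Real.sqrt (‖y‖^2 + a^2) ≤ Real.sqrt ((‖y‖ + |a|)^2) := Real.sqrt_le_sqrt this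
    _ = ‖y‖ + |a| := Real.sqrt_sq (by positivity)

noncomputable def wvec (N : ℕ) (i : Fin (N+1)) : EuclideanSpace ℝ (Fin N) :=
  if h : (i:ℕ) < N then EuclideanSpace.single (⟨i, h⟩ : Fin N) 1
  else WithLp.toLp 2 (fun _ => -1 : Fin N → ℝ)

lemma wvec_norm_le (N : ℕ) (hN : 1 ≤ N) (i : Fin (N+1)) : ‖wvec N i‖ ≤ N := by
  unfold wvec
  split
  · rw [EuclideanSpace.norm_single]
    simpa using (by exact_mod_cast hN : (1:ℝ) ≤ N)
  · rw [EuclideanSpace.norm_eq]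
    have : ∑ j : Fin N, ‖(fun _ => -1 : Fin N → ℝ) j‖^2 = (N:ℝ) := by
      simp
    rw [this]
    calc Real.sqrt N ≤ Real.sqrt ((N:ℝ)^2) := by
          apply Real.sqrt_le_sqrt
          nlinarith [(by exact_mod_cast hN : (1:ℝ) ≤ N)]
      _ = N := Real.sqrt_sq (by positivity)

lemma exists_colour (N : ℕ) (hN : 1 ≤ N) (x : EuclideanSpace ℝ (Fin N)) (hx : ‖x‖ = 1) :
    ∃ i : Fin (N+1), 1/(2*N+1) ≤ (inner ℝ (wvec N i) x : ℝ) := by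
  by_contra hcon
  push_neg at hcon
  set β : ℝ := 1/(2*N+1) with hβ
  have hβpos : 0 < β := by positivity
  have hxj : ∀ j : Fin N, x j < β := by
    intro j
    have h := hcon ⟨(j:ℕ), by omega⟩
    have hlt : ((⟨(j:ℕ), by omega⟩ : Fin (N+1)) : ℕ) < N := j.2
    rw [wvec, dif_pos hlt] at h
    have hj : (⟨((⟨(j:ℕ), by omega⟩ : Fin (N+1)) : ℕ), hlt⟩ : Fin N) = j := Fin.ext rfl
    rw [hj, EuclideanSpace.inner_single_left] at h
    simpa using h
  have hsum : -(∑ j, x j) < β := by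
    have h := hcon (Fin.last N)
    rw [wvec, dif_neg (by simp)] at h
    rw [PiLp.inner_apply] at h
    simpa using h
  have habs : ∀ j : Fin N, |x j| = 2 * max (x j) 0 - x j := by
    intro j
    rcases le_total 0 (x j) with h | h
    · rw [abs_of_nonneg h, max_eq_left h]; ring
    · rw [abs_of_nonpos h, max_eq_right h]; ring
  have hmax : (∑ j, max (x j) 0) < N * β := by
    have : (∑ _j : Fin N, β) = N * β := by simp [mul_comm]
    rw [← this]
    apply Finset.sum_lt_sum_of_nonempty
    · haveI : NeZero N := ⟨by omega⟩
      exact Finset.univ_nonempty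
    · intro j _
      exact max_lt (hxj j) hβpos
  have h2 : ‖x‖ ≤ ∑ j, |x j| := by
    rw [EuclideanSpace.norm_eq]
    have hs : ∑ j, ‖x j‖^2 ≤ (∑ j, |x j|)^2 := by
      simpa [Real.norm_eq_abs, sq_abs] using
        Finset.sum_sq_le_sq_sum_of_nonneg (f := fun j => |x j|)
          (fun i _ => abs_nonneg (x i))
    calc Real.sqrt (∑ j, ‖x j‖^2) ≤ Real.sqrt ((∑ j, |x j|)^2) := Real.sqrt_le_sqrt hs
      _ = ∑ j, |x j| := Real.sqrt_sq (by positivity)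
  have h3 : (∑ j, |x j|) = 2 * (∑ j, max (x j) 0) - ∑ j, x j := by
    rw [Finset.mul_sum, ← Finset.sum_sub_distrib]
    exact Finset.sum_congr rfl fun j _ => habs j
  have hβ1 : (2*(N:ℝ)+1) * β = 1 := by
    rw [hβ]; field_simp
  rw [hx] at h2
  linarith

lemma colour_sep (N : ℕ) (hN : 1 ≤ N) (y y' : EuclideanSpace ℝ (Fin N)) (i : Fin (N+1))
    (h1 : 1/(2*N+1) ≤ (inner ℝ (wvec N i) y : ℝ))
    (h2 : 1/(2*N+1) ≤ (inner ℝ (wvec N i) y' : ℝ)) :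
    2 * (1/(2*(N:ℝ)+1)) ≤ N * ‖y + y'‖ := by
  have hadd : (inner ℝ (wvec N i) (y + y') : ℝ) = inner ℝ (wvec N i) y + inner ℝ (wvec N i) y' :=
    inner_add_right ..
  have hcs : (inner ℝ (wvec N i) (y + y') : ℝ) ≤ ‖wvec N i‖ * ‖y + y'‖ := real_inner_le_norm ..
  have hw : ‖wvec N i‖ * ‖y + y'‖ ≤ N * ‖y + y'‖ :=
    mul_le_mul_of_nonneg_right (wvec_norm_le N hN i) (norm_nonneg _)
  linarith

end Helpers

/-- The generalised Mycielskian `M_r(G)`: vertex set `V × {0,…,r−1} ∪ {z}`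
(`none` plays the role of `z`), with edges `{(u,0),(v,0)}` and `{(u,i),(v,i+1)}`
whenever `{u,v} ∈ E(G)`, and edges `{(u,r−1),z}` for all `u`. -/
def genMycielski {V : Type} (G : SimpleGraph V) (r : ℕ) :
    SimpleGraph (Option (V × Fin r)) :=
  SimpleGraph.fromRel (fun a b =>
    match a, b with
    | some (u, i), some (v, j) =>
        G.Adj u v ∧ ((i : ℕ) = 0 ∧ (j : ℕ) = 0 ∨ (j : ℕ) = (i : ℕ) + 1)
    | some (_, i), none => (i : ℕ) = r - 1
    | _, _ => False)
/-- `MycFamily k V G` : the graph `G` on vertex set `V` belongs to the family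
`𝓜_k` of generalised Mycielski graphs, obtained from `K₂` by `k − 2`
iterations of `M_r(·)`, where `r ≥ 1` may vary between iterations. -/
inductive MycFamily : ℕ → (V : Type) → SimpleGraph V → Prop
  | base : MycFamily 2 (Fin 2) ⊤
  | step {k : ℕ} {V : Type} {G : SimpleGraph V} (r : ℕ) (hr : 1 ≤ r)
      (h : MycFamily k V G) :
      MycFamily (k + 1) (Option (V × Fin r)) (genMycielski G r)

lemma embed (t : ℕ) : ∀ ε : ℝ, 0 < ε →
    ∃ (V : Type) (G : SimpleGraph V), MycFamily (t+2) V G ∧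
      ∃ φ : V → EuclideanSpace ℝ (Fin (t+1)),
        (∀ v, ‖φ v‖ = 1) ∧ ∀ u v, G.Adj u v → ‖φ u + φ v‖ < ε := by
  induction t with
  | zero =>
    intro ε hε
    refine ⟨Fin 2, ⊤, MycFamily.base,
      fun j => snocE 0 (if j = 0 then 1 else -1), ?_, ?_⟩
    · intro v
      rw [snocE_norm]
      split <;> simp
    · intro u v huv
      have hne : u ≠ v := huv.ne
      have hkey : ∀ a b : ℝ, a + b = 0 →
          ‖snocE (0 : EuclideanSpace ℝ (Fin 0)) a + snocE 0 b‖ < ε := by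
        intro a b hab
        rw [snocE_add, hab, snocE_norm]
        simpa using hε
      fin_cases u <;> fin_cases v <;> simp_all <;>
        · apply hkey; norm_num
  | succ t ih =>
    intro ε hε
    obtain ⟨V, G, hG, φ, hφ1, hφ2⟩ := ih (ε/2) (by positivity)
    set s : ℕ := ⌈π/ε⌉₊ + 1 with hs_def
    have hs : 0 < s := Nat.succ_pos _
    have hsR : (0:ℝ) < s := by exact_mod_cast hs
    have hπε : π / ε < s := by
      calc π / ε ≤ (⌈π/ε⌉₊ : ℝ) := Nat.le_ceil _
        _ < s := by exact_mod_cast Nat.lt_succ_self _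
    have hπs : π / (2*s) < ε / 2 := by
      rw [div_lt_div_iff₀ (by positivity) (by norm_num)]
      have hπ : π < s * ε := by
        rw [div_lt_iff₀ hε] at hπε
        linarith
      nlinarith
    set r : ℕ := 2*s + 1 with hr_def
    set H : ℝ := π / (4*s) with hH_def
    have hHpos : 0 < H := by positivity
    set ψ : Option (V × Fin r) → EuclideanSpace ℝ (Fin (t+2)) :=
      fun a => match a with
      | none => snocE 0 (-1)
      | some (u, i) => snocE (Real.cos ((i:ℕ)*H) • φ u)
          ((-1)^(i:ℕ) * Real.sin ((i:ℕ)*H)) with hψ_def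
    have hψs : ∀ u (i : Fin r), ψ (some (u,i)) = snocE (Real.cos ((i:ℕ)*H) • φ u)
        ((-1)^(i:ℕ) * Real.sin ((i:ℕ)*H)) := fun u i => rfl
    have hψn : ψ none = snocE 0 (-1) := rfl
    have hψ_norm : ∀ a, ‖ψ a‖ = 1 := by
      intro a
      rcases a with _ | ⟨u, i⟩
      · rw [hψn, snocE_norm]; simp
      · rw [hψs, snocE_norm, norm_smul, Real.norm_eq_abs, hφ1, mul_one, mul_pow, sq_abs]
        rw [show ((-1:ℝ)^(i:ℕ))^2 = 1 by
          rw [← pow_mul, mul_comm, pow_mul]; norm_num]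
        rw [one_mul, add_comm, Real.sin_sq_add_cos_sq, Real.sqrt_one]
    have key : ∀ (u v : V) (i j : Fin r), G.Adj u v →
        ((i:ℕ) = 0 ∧ (j:ℕ) = 0 ∨ (j:ℕ) = (i:ℕ) + 1) →
        ‖ψ (some (u,i)) + ψ (some (v,j))‖ < ε := by
      intro u v i j hadj hij
      rw [hψs, hψs, snocE_add]
      rcases hij with ⟨hi, hj⟩ | hj
      · rw [hi, hj]
        simp only [Nat.cast_zero, zero_mul, Real.cos_zero, Real.sin_zero, one_smul,
          mul_zero, add_zero, pow_zero]
        rw [snocE_norm]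
        have h1 := hφ2 u v hadj
        calc Real.sqrt (‖φ u + φ v‖^2 + 0^2)
            = ‖φ u + φ v‖ := by
              rw [show (0:ℝ)^2 = 0 by norm_num, add_zero]
              exact Real.sqrt_sq (norm_nonneg _)
          _ < ε := by linarith
      · have hcast : ((j:ℕ):ℝ) = ((i:ℕ):ℝ) + 1 := by rw [hj]; push_cast; ring
        set x : ℝ := ((i:ℕ):ℝ) * H with hx_def
        set x' : ℝ := (((i:ℕ):ℝ) + 1) * H with hx'_def
        have hxj : ((j:ℕ):ℝ) * H = x' := by rw [hcast]
        have hsign : ((-1:ℝ))^(j:ℕ) = -((-1:ℝ))^(i:ℕ) := by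
          rw [hj, pow_succ]; ring
        rw [hxj, hsign]
        have hvec : Real.cos x • φ u + Real.cos x' • φ v
            = Real.cos x • (φ u + φ v) + (Real.cos x' - Real.cos x) • φ v := by
          rw [smul_add, sub_smul]; abel
        have hlast : (-1:ℝ)^(i:ℕ) * Real.sin x + -(-1:ℝ)^(i:ℕ) * Real.sin x'
            = (-1:ℝ)^(i:ℕ) * (Real.sin x - Real.sin x') := by ring
        rw [hvec, hlast]
        have hb1 : ‖Real.cos x • (φ u + φ v) + (Real.cos x' - Real.cos x) • φ v‖
            ≤ ‖φ u + φ v‖ + H := by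
          calc ‖Real.cos x • (φ u + φ v) + (Real.cos x' - Real.cos x) • φ v‖
              ≤ ‖Real.cos x • (φ u + φ v)‖ + ‖(Real.cos x' - Real.cos x) • φ v‖ :=
                norm_add_le _ _
            _ = |Real.cos x| * ‖φ u + φ v‖ + |Real.cos x' - Real.cos x| * ‖φ v‖ := by
                rw [norm_smul, norm_smul, Real.norm_eq_abs, Real.norm_eq_abs]
            _ ≤ 1 * ‖φ u + φ v‖ + H * 1 := by
                apply add_le_add
                · exact mul_le_mul_of_nonneg_right (Real.abs_cos_le_one x) (norm_nonneg _)
                · rw [hφ1]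
                  apply mul_le_mul_of_nonneg_right _ (by norm_num)
                  calc |Real.cos x' - Real.cos x| ≤ |x' - x| := lipcos _ _
                    _ = H := by
                        rw [hx'_def, hx_def]
                        rw [show (((i:ℕ):ℝ) + 1) * H - ((i:ℕ):ℝ) * H = H by ring]
                        exact abs_of_pos hHpos
            _ = ‖φ u + φ v‖ + H := by ring
        have hb2 : |(-1:ℝ)^(i:ℕ) * (Real.sin x - Real.sin x')| ≤ H := by
          rw [abs_mul, abs_pow, abs_neg, abs_one, one_pow, one_mul]
          calc |Real.sin x - Real.sin x'| ≤ |x - x'| := lipsin _ _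
            _ = H := by
                rw [hx'_def, hx_def]
                rw [show ((i:ℕ):ℝ) * H - (((i:ℕ):ℝ) + 1) * H = -H by ring]
                rw [abs_neg]
                exact abs_of_pos hHpos
        have h2H : 2 * H < ε / 2 := by
          have : 2 * H = π / (2*s) := by rw [hH_def]; field_simp; ring
          rw [this]; exact hπs
        have h1 := hφ2 u v hadj
        calc ‖snocE (Real.cos x • (φ u + φ v) + (Real.cos x' - Real.cos x) • φ v)
              ((-1:ℝ)^(i:ℕ) * (Real.sin x - Real.sin x'))‖
            ≤ ‖Real.cos x • (φ u + φ v) + (Real.cos x' - Real.cos x) • φ v‖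
              + |(-1:ℝ)^(i:ℕ) * (Real.sin x - Real.sin x')| := snocE_norm_le _ _
          _ ≤ (‖φ u + φ v‖ + H) + H := add_le_add hb1 hb2
          _ < ε := by linarith
    have key2 : ∀ (u : V) (i : Fin r), (i:ℕ) = r - 1 →
        ‖ψ (some (u,i)) + ψ none‖ < ε := by
      intro u i hi
      have hi' : (i:ℕ) = 2*s := by omega
      have hx : ((i:ℕ):ℝ) * H = π/2 := by
        rw [hi', hH_def]
        push_cast
        field_simp
        ring
      rw [hψs, hψn, hx, Real.cos_pi_div_two, Real.sin_pi_div_two, zero_smul, snocE_add]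
      have hsign : ((-1:ℝ))^(i:ℕ) = 1 := by
        rw [hi']
        exact Even.neg_one_pow ⟨s, by ring⟩
      rw [hsign, snocE_norm]
      simpa using hε
    refine ⟨Option (V × Fin r), genMycielski G r, MycFamily.step r (by omega) hG,
      ψ, hψ_norm, ?_⟩
    intro a b hab
    unfold genMycielski at hab
    rw [SimpleGraph.fromRel_adj] at hab
    obtain ⟨hne, hrel⟩ := hab
    rcases a with _ | ⟨u, i⟩ <;> rcases b with _ | ⟨v, j⟩
    · exact absurd rfl hne
    · rcases hrel with h | h
      · cases h
      · rw [show ψ none + ψ (some (v, j)) = ψ (some (v, j)) + ψ none from add_comm _ _]; exact key2 v j h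
    · rcases hrel with h | h
      · exact key2 u i h
      · cases h
    · rcases hrel with ⟨h1, h2⟩ | ⟨h1, h2⟩
      · exact key u v i j h1 h2
      · rw [show ψ (some (u, i)) + ψ (some (v, j)) = ψ (some (v, j)) + ψ (some (u, i)) from add_comm _ _]; exact key v u j i h1 h2

/-- Stiebitz's theorem implies the Borsuk–Ulam theorem: if every graph in
`𝓜_k` has chromatic number at least `k`, then there is no continuous
antipodal map `f : Sⁿ → S^{n−1}`. -/
theorem stiebitz_implies_borsuk_ulam
    (stiebitz : ∀ (k : ℕ) (V : Type) (G : SimpleGraph V),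
      2 ≤ k → MycFamily k V G → (k : ℕ∞) ≤ G.chromaticNumber)
    (n : ℕ) :
    ¬ ∃ f : Metric.sphere (0 : EuclideanSpace ℝ (Fin (n + 1))) 1 →
        Metric.sphere (0 : EuclideanSpace ℝ (Fin n)) 1,
      Continuous f ∧ ∀ x, f (-x) = -f x := by
  rintro ⟨f, hf, hanti⟩
  have hx₀ : (EuclideanSpace.single (0 : Fin (n+1)) (1:ℝ)) ∈
      Metric.sphere (0 : EuclideanSpace ℝ (Fin (n+1))) 1 := by
    rw [mem_sphere_zero_iff_norm, EuclideanSpace.norm_single]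
    norm_num
  set x₀ : Metric.sphere (0 : EuclideanSpace ℝ (Fin (n+1))) 1 := ⟨_, hx₀⟩ with hx₀_def
  rcases Nat.eq_zero_or_pos n with hn | hn
  · subst hn
    have h1 : ‖((f x₀ : Metric.sphere (0 : EuclideanSpace ℝ (Fin 0)) 1) :
        EuclideanSpace ℝ (Fin 0))‖ = 1 := mem_sphere_zero_iff_norm.mp (f x₀).2
    have h0 : ((f x₀ : Metric.sphere (0 : EuclideanSpace ℝ (Fin 0)) 1) :
        EuclideanSpace ℝ (Fin 0)) = 0 := Subsingleton.elim _ _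
    rw [h0] at h1
    simp at h1
  · set β : ℝ := 1/(2*(n:ℝ)+1) with hβ_def
    have hβpos : 0 < β := by positivity
    have hnR : (0:ℝ) < n := by exact_mod_cast hn
    set γ : ℝ := 2 * β / n with hγ_def
    have hγpos : 0 < γ := by positivity
    have huc : UniformContinuous f := CompactSpace.uniformContinuous_of_continuous hf
    obtain ⟨δ, hδpos, hδ⟩ := Metric.uniformContinuous_iff.mp huc γ hγpos
    obtain ⟨V, G, hG, φ, hφ1, hφ2⟩ := embed n δ hδpos
    set Φ : V → Metric.sphere (0 : EuclideanSpace ℝ (Fin (n+1))) 1 := fun v =>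
      ⟨φ v, by rw [mem_sphere_zero_iff_norm]; exact hφ1 v⟩ with hΦ_def
    have hcol : ∀ v : V, ∃ i : Fin (n+1),
        1/(2*(n:ℝ)+1) ≤ (inner ℝ (wvec n i) ((f (Φ v) : Metric.sphere
          (0 : EuclideanSpace ℝ (Fin n)) 1) : EuclideanSpace ℝ (Fin n)) : ℝ) := by
      intro v
      exact exists_colour n hn _ (mem_sphere_zero_iff_norm.mp (f (Φ v)).2)
    choose C hC using hcol
    have hproper : ∀ u v : V, G.Adj u v → C u ≠ C v := by
      intro u v huv hCuv
      have hdist : dist (Φ u) (-(Φ v)) < δ := by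
        rw [Subtype.dist_eq]
        rw [coe_neg_sphere]
        rw [dist_eq_norm, sub_neg_eq_add]
        exact hφ2 u v huv
      have hfd := hδ hdist
      rw [hanti (Φ v)] at hfd
      rw [Subtype.dist_eq, coe_neg_sphere, dist_eq_norm, sub_neg_eq_add] at hfd
      have hsep := colour_sep n hn _ _ (C u) (hC u) (hCuv ▸ hC v)
      have : (n:ℝ) * ‖((f (Φ u) : Metric.sphere (0 : EuclideanSpace ℝ (Fin n)) 1) :
          EuclideanSpace ℝ (Fin n)) + ((f (Φ v) : Metric.sphere
          (0 : EuclideanSpace ℝ (Fin n)) 1) : EuclideanSpace ℝ (Fin n))‖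
          < (n:ℝ) * γ := by
        exact mul_lt_mul_of_pos_left hfd hnR
      have hγn : (n:ℝ) * γ = 2 * β := by
        rw [hγ_def]; field_simp
      rw [hγn] at this
      rw [hβ_def] at this
      linarith
    have hcolorable : G.Colorable (n+1) :=
      ⟨SimpleGraph.Coloring.mk C (fun {u v} h => hproper u v h)⟩
    have hle : G.chromaticNumber ≤ ((n+1 : ℕ) : ℕ∞) := hcolorable.chromaticNumber_le
    have hge := stiebitz (n+2) V G (by omega) hG
    have hcon : ((n+2 : ℕ) : ℕ∞) ≤ ((n+1 : ℕ) : ℕ∞) := by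
      calc ((n+2 : ℕ) : ℕ∞) ≤ G.chromaticNumber := by exact_mod_cast hge
        _ ≤ ((n+1 : ℕ) : ℕ∞) := hle
    have : n+2 ≤ n+1 := by exact_mod_cast hcon
    omega
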